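/- Let p : ℝ³ → ℝ³ be a vector field whose components pⁱ are homogeneous polynomials of degree m, and let s be an integer with s + m + 2 ≠ 0. Suppose that ∂ᵢ(r^s pⁱ) = 0 on ℝ³ \ {0}, where r(x) = ‖x‖. Define βₖ = r^s (s + m + 2)^{-1} ε_{kjl} p^j x^l, where ε is the Levi-Civita symbol. Then ε^{ijk} ∂ⱼ βₖ = r^s pⁱ on ℝ³ \ {0}, i.e., the curl of β equals r^s p. -/

import Mathlib

/-- The Euclidean radial coordinate `r(x) = (x₁² + x₂² + x₃²)^{1/2}` on ℝ³. -/
noncomputable def rad (x : Fin 3 → ℝ) : ℝ := Real.sqrt (x 0 ^ 2 + x 1 ^ 2 + x 2 ^ 2)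

/-- The Levi-Civita symbol `ε_{ijk}` on three indices, with `ε₀₁₂ = 1`. -/
def lc (i j k : Fin 3) : ℝ :=
  if (i = 0 ∧ j = 1 ∧ k = 2) ∨ (i = 1 ∧ j = 2 ∧ k = 0) ∨ (i = 2 ∧ j = 0 ∧ k = 1) then 1
  else if (i = 2 ∧ j = 1 ∧ k = 0) ∨ (i = 1 ∧ j = 0 ∧ k = 2) ∨ (i = 0 ∧ j = 2 ∧ k = 1) then -1
  else 0

/-- The partial derivative `∂ᵢ f` in Cartesian coordinates. -/
noncomputable def pd (i : Fin 3) (f : (Fin 3 → ℝ) → ℝ) (x : Fin 3 → ℝ) : ℝ :=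
  fderiv ℝ f x (Pi.single i 1)

section Helpers

open MvPolynomial

lemma diff_coord (i : Fin 3) : Differentiable ℝ (fun x : Fin 3 → ℝ => x i) :=
  (ContinuousLinearMap.proj i : (Fin 3 → ℝ) →L[ℝ] ℝ).differentiable

lemma diff_eval (P : MvPolynomial (Fin 3) ℝ) :
    Differentiable ℝ (fun x : Fin 3 → ℝ => eval x P) := by
  induction P using MvPolynomial.induction_on with
  | C a => simpa using differentiable_const a
  | add p q hp hq => simp only [map_add]; exact hp.fun_add hq
  | mul_X p i hp => simp only [map_mul, eval_X]; exact hp.fun_mul (diff_coord i)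

lemma pd_mul {f g : (Fin 3 → ℝ) → ℝ} {x : Fin 3 → ℝ} (j : Fin 3)
    (hf : DifferentiableAt ℝ f x) (hg : DifferentiableAt ℝ g x) :
    pd j (fun y => f y * g y) x = pd j f x * g x + f x * pd j g x := by
  simp only [pd, fderiv_fun_mul hf hg, ContinuousLinearMap.add_apply,
    ContinuousLinearMap.smul_apply, smul_eq_mul]
  ring

lemma pd_const_mul {f : (Fin 3 → ℝ) → ℝ} {x : Fin 3 → ℝ} (j : Fin 3) (c : ℝ)
    (hf : DifferentiableAt ℝ f x) :
    pd j (fun y => c * f y) x = c * pd j f x := by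
  simp only [pd, fderiv_const_mul hf]
  simp

lemma pd_coord (j l : Fin 3) (x : Fin 3 → ℝ) :
    pd j (fun y => y l) x = if l = j then 1 else 0 := by
  have : fderiv ℝ (fun y : Fin 3 → ℝ => y l) x
      = (ContinuousLinearMap.proj l : (Fin 3 → ℝ) →L[ℝ] ℝ) :=
    (ContinuousLinearMap.proj l : (Fin 3 → ℝ) →L[ℝ] ℝ).fderiv
  simp [pd, this, Pi.single_apply]

lemma pd_sum {F : Fin 3 → (Fin 3 → ℝ) → ℝ} {x : Fin 3 → ℝ} (j : Fin 3)
    (hF : ∀ a, DifferentiableAt ℝ (F a) x) :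
    pd j (fun y => ∑ a, F a y) x = ∑ a, pd j (F a) x := by
  simp only [pd, fderiv_fun_sum (fun a _ => hF a)]
  simp

lemma sq_sum_pos {x : Fin 3 → ℝ} (hx : x ≠ 0) : 0 < x 0 ^ 2 + x 1 ^ 2 + x 2 ^ 2 := by
  rcases lt_or_eq_of_le (by positivity : (0:ℝ) ≤ x 0 ^ 2 + x 1 ^ 2 + x 2 ^ 2) with h | h
  · exact h
  · exfalso; apply hx
    have h0 : x 0 = 0 ∧ x 1 = 0 ∧ x 2 = 0 := by
      refine ⟨?_, ?_, ?_⟩ <;>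
        nlinarith [sq_nonneg (x 0), sq_nonneg (x 1), sq_nonneg (x 2)]
    funext i
    fin_cases i <;> simp [h0.1, h0.2.1, h0.2.2]

lemma rad_pos {x : Fin 3 → ℝ} (hx : x ≠ 0) : 0 < rad x :=
  Real.sqrt_pos.mpr (sq_sum_pos hx)

lemma rad_sq {x : Fin 3 → ℝ} (hx : x ≠ 0) : rad x ^ 2 = x 0 ^ 2 + x 1 ^ 2 + x 2 ^ 2 :=
  Real.sq_sqrt (sq_sum_pos hx).le

lemma hasFDerivAt_radzpow (s : ℤ) {x : Fin 3 → ℝ} (hx : x ≠ 0) :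
    HasFDerivAt (fun y => rad y ^ s)
      (((s : ℝ) * rad x ^ (s - 2)) •
        ((x 0 • (ContinuousLinearMap.proj 0 : (Fin 3 → ℝ) →L[ℝ] ℝ)) +
         (x 1 • (ContinuousLinearMap.proj 1 : (Fin 3 → ℝ) →L[ℝ] ℝ)) +
         (x 2 • (ContinuousLinearMap.proj 2 : (Fin 3 → ℝ) →L[ℝ] ℝ)))) x := by
  have hr := rad_pos hx
  set pr : Fin 3 → ((Fin 3 → ℝ) →L[ℝ] ℝ) := fun i => ContinuousLinearMap.proj i with hpr
  have hq : HasFDerivAt (fun y : Fin 3 → ℝ => y 0 ^ 2 + y 1 ^ 2 + y 2 ^ 2)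
      ((2 * x 0) • pr 0 + (2 * x 1) • pr 1 + (2 * x 2) • pr 2) x := by
    have h0 : ∀ i : Fin 3, HasFDerivAt (fun y : Fin 3 → ℝ => y i ^ 2) ((2 * x i) • pr i) x := by
      intro i
      have this : HasFDerivAt (fun y : Fin 3 → ℝ => pr i y * pr i y) (pr i x • pr i + pr i x • pr i) x :=
        ((pr i).hasFDerivAt (x := x)).fun_mul ((pr i).hasFDerivAt (x := x))
      convert this using 1
      · funext y; simp [pr, sq]
      · simp [pr]
        module
    exact ((h0 0).add (h0 1)).add (h0 2)
  have hsqrt : HasDerivAt Real.sqrt (1 / (2 * rad x)) (x 0 ^ 2 + x 1 ^ 2 + x 2 ^ 2) :=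
    Real.hasDerivAt_sqrt (sq_sum_pos hx).ne'
  have hrad : HasFDerivAt rad
      ((1 / (2 * rad x)) • ((2 * x 0) • pr 0 + (2 * x 1) • pr 1 + (2 * x 2) • pr 2)) x :=
    hsqrt.comp_hasFDerivAt x hq
  have hz : HasDerivAt (fun t : ℝ => t ^ s) ((s : ℝ) * rad x ^ (s - 1)) (rad x) :=
    hasDerivAt_zpow s (rad x) (Or.inl hr.ne')
  have key := hz.comp_hasFDerivAt x hrad
  have h1 : rad x ^ (s - 1) = rad x ^ (s - 2) * rad x := by
    rw [← zpow_add_one₀ hr.ne']; ring_nf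
  have heq : ((s : ℝ) * rad x ^ (s - 1)) • (1 / (2 * rad x)) •
        ((2 * x 0) • pr 0 + (2 * x 1) • pr 1 + (2 * x 2) • pr 2)
      = ((s : ℝ) * rad x ^ (s - 2)) • (x 0 • pr 0 + x 1 • pr 1 + x 2 • pr 2) := by
    ext v
    simp only [ContinuousLinearMap.smul_apply, ContinuousLinearMap.add_apply, smul_eq_mul, h1]
    field_simp
  rw [heq] at key
  exact key

lemma diffAt_radzpow (s : ℤ) {x : Fin 3 → ℝ} (hx : x ≠ 0) :
    DifferentiableAt ℝ (fun y => rad y ^ s) x :=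
  (hasFDerivAt_radzpow s hx).differentiableAt

lemma pd_radzpow (s : ℤ) (j : Fin 3) {x : Fin 3 → ℝ} (hx : x ≠ 0) :
    pd j (fun y => rad y ^ s) x = (s : ℝ) * rad x ^ (s - 2) * x j := by
  simp only [pd, (hasFDerivAt_radzpow s hx).fderiv]
  simp only [ContinuousLinearMap.smul_apply, ContinuousLinearMap.add_apply,
    ContinuousLinearMap.proj_apply, smul_eq_mul, Pi.single_apply]
  fin_cases j <;> simp <;> ring

lemma eval_smul_hom {P : MvPolynomial (Fin 3) ℝ} {m : ℕ} (h : P.IsHomogeneous m)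
    (c : ℝ) (x : Fin 3 → ℝ) : eval (c • x) P = c ^ m * eval x P := by
  rw [eval_eq', eval_eq', Finset.mul_sum]
  apply Finset.sum_congr rfl
  intro d hd
  have hdeg : ∑ i, d i = m := by
    have := h (MvPolynomial.mem_support_iff.mp hd)
    rw [← this]
    simp [Finsupp.weight_apply, Finsupp.sum_fintype]
  have hprod : ∏ i, (c • x) i ^ d i = c ^ m * ∏ i, x i ^ d i := by
    simp only [Pi.smul_apply, smul_eq_mul, mul_pow]
    rw [Finset.prod_mul_distrib, Finset.prod_pow_eq_pow_sum, hdeg]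
  rw [hprod]; ring

lemma euler {P : MvPolynomial (Fin 3) ℝ} {m : ℕ} (h : P.IsHomogeneous m) (x : Fin 3 → ℝ) :
    x 0 * pd 0 (fun y => eval y P) x + x 1 * pd 1 (fun y => eval y P) x
      + x 2 * pd 2 (fun y => eval y P) x = (m : ℝ) * eval x P := by
  set f : (Fin 3 → ℝ) → ℝ := fun y => eval y P with hf
  have hdf : DifferentiableAt ℝ f x := (diff_eval P).differentiableAt
  have hline : HasDerivAt (fun t : ℝ => t • x) ((1 : ℝ) • x) 1 :=
    (hasDerivAt_id 1).smul_const x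
  have hFat : HasFDerivAt f (fderiv ℝ f x) ((1 : ℝ) • x) := by
    rw [one_smul]; exact hdf.hasFDerivAt
  have hcomp : HasDerivAt (f ∘ fun t : ℝ => t • x) (fderiv ℝ f x ((1 : ℝ) • x)) 1 :=
    hFat.comp_hasDerivAt 1 hline
  have hpow : HasDerivAt (fun t : ℝ => t ^ m * f x) ((m : ℝ) * (1:ℝ) ^ (m - 1) * f x) 1 :=
    (hasDerivAt_pow m 1).mul_const (f x)
  have hfun : (f ∘ fun t : ℝ => t • x) = fun t : ℝ => t ^ m * f x := by
    funext t
    simp only [Function.comp, hf]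
    exact eval_smul_hom h t x
  rw [hfun] at hcomp
  have huniq : fderiv ℝ f x ((1 : ℝ) • x) = (m : ℝ) * (1:ℝ) ^ (m - 1) * f x :=
    hcomp.unique hpow
  have hxdec : (1 : ℝ) • x = x 0 • (Pi.single 0 1 : Fin 3 → ℝ)
      + x 1 • (Pi.single 1 1 : Fin 3 → ℝ) + x 2 • (Pi.single 2 1 : Fin 3 → ℝ) := by
    funext i
    fin_cases i <;> simp [Pi.single_apply]
  rw [hxdec] at huniq
  simp only [map_add, map_smul, smul_eq_mul, one_pow, mul_one] at huniq ⊢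
  simpa [pd] using huniq

end Helpers

/-- if `pⁱ` are homogeneous polynomials of degree `m`, `s + m + 2 ≠ 0`,
and `∂ᵢ(r^s pⁱ) = 0` away from the origin, then
`βₖ = r^s (s+m+2)⁻¹ ε_{kjl} p^j x^l` satisfies `ε^{ijk} ∂ⱼ βₖ = r^s pⁱ` away from
the origin. -/
theorem curl_of_radial_potential (p : Fin 3 → (Fin 3 → ℝ) → ℝ) (m : ℕ) (s : ℤ)
    (P : Fin 3 → MvPolynomial (Fin 3) ℝ)
    (hhom : ∀ i, (P i).IsHomogeneous m)
    (hp : ∀ i x, p i x = MvPolynomial.eval x (P i))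
    (hs : (s : ℝ) + (m : ℝ) + 2 ≠ 0)
    (hdiv : ∀ x : Fin 3 → ℝ, x ≠ 0 → ∑ i, pd i (fun y => rad y ^ s * p i y) x = 0)
    (β : Fin 3 → (Fin 3 → ℝ) → ℝ)
    (hβ : ∀ k y, β k y =
      rad y ^ s * ((s : ℝ) + (m : ℝ) + 2)⁻¹ * ∑ j, ∑ l, lc k j l * p j y * y l) :
    ∀ x : Fin 3 → ℝ, x ≠ 0 → ∀ i,
      ∑ j, ∑ k, lc i j k * pd j (β k) x = rad x ^ s * p i x := by
  intro x hx i
  set c : ℝ := ((s : ℝ) + (m : ℝ) + 2)⁻¹ with hc_def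
  have hβ' : ∀ k, β k = fun y =>
      rad y ^ s * (c * ∑ a, ∑ b, lc k a b * (MvPolynomial.eval y (P a) * y b)) := by
    intro k; funext y
    rw [hβ k y]
    simp only [hp, mul_assoc]
  -- differentiability of building blocks
  have d1 : ∀ (k a b : Fin 3),
      Differentiable ℝ (fun y => lc k a b * (MvPolynomial.eval y (P a) * y b)) :=
    fun k a b => ((diff_eval (P a)).mul (diff_coord b)).const_mul _
  have d2 : ∀ (k a : Fin 3),
      Differentiable ℝ (fun y => ∑ b, lc k a b * (MvPolynomial.eval y (P a) * y b)) :=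
    fun k a => Differentiable.fun_sum (fun b _ => d1 k a b)
  have d3 : ∀ (k : Fin 3),
      Differentiable ℝ (fun y => ∑ a, ∑ b, lc k a b * (MvPolynomial.eval y (P a) * y b)) :=
    fun k => Differentiable.fun_sum (fun a _ => d2 k a)
  -- the derivative of the double sum
  have hpdG : ∀ (j k : Fin 3),
      pd j (fun y => ∑ a, ∑ b, lc k a b * (MvPolynomial.eval y (P a) * y b)) x
        = ∑ a, ∑ b, lc k a b *
            (pd j (fun y => MvPolynomial.eval y (P a)) x * x b
              + MvPolynomial.eval x (P a) * (if b = j then 1 else 0)) := by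
    intro j k
    rw [pd_sum j (fun a => (d2 k a).differentiableAt)]
    apply Finset.sum_congr rfl
    intro a _
    rw [pd_sum j (fun b => (d1 k a b).differentiableAt)]
    apply Finset.sum_congr rfl
    intro b _
    rw [pd_const_mul j _ ((diff_eval (P a)).fun_mul (diff_coord b)).differentiableAt]
    rw [pd_mul j (diff_eval (P a)).differentiableAt (diff_coord b).differentiableAt]
    rw [pd_coord j b x]
  -- closed form for pd j (β k) x
  have hpdβ : ∀ (j k : Fin 3), pd j (β k) x
      = ((s : ℝ) * rad x ^ (s - 2) * x j) *
          (c * ∑ a, ∑ b, lc k a b * (MvPolynomial.eval x (P a) * x b))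
        + rad x ^ s * (c * ∑ a, ∑ b, lc k a b *
            (pd j (fun y => MvPolynomial.eval y (P a)) x * x b
              + MvPolynomial.eval x (P a) * (if b = j then 1 else 0))) := by
    intro j k
    rw [hβ' k]
    rw [pd_mul j (diffAt_radzpow s hx) ((d3 k).const_mul c).differentiableAt]
    rw [pd_radzpow s j hx, pd_const_mul j c (d3 k).differentiableAt, hpdG j k]
  -- divergence identity in closed form
  have hprd : ∀ a : Fin 3, pd a (fun y => rad y ^ s * p a y) x
      = ((s : ℝ) * rad x ^ (s - 2) * x a) * MvPolynomial.eval x (P a)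
        + rad x ^ s * pd a (fun y => MvPolynomial.eval y (P a)) x := by
    intro a
    have he : (fun y => rad y ^ s * p a y) = fun y => rad y ^ s * MvPolynomial.eval y (P a) := by
      funext y; rw [hp]
    rw [he, pd_mul a (diffAt_radzpow s hx) (diff_eval (P a)).differentiableAt,
      pd_radzpow s a hx]
  have hDv := hdiv x hx
  rw [Fin.sum_univ_three, hprd 0, hprd 1, hprd 2] at hDv
  have hE : ∀ a : Fin 3,
      x 0 * pd 0 (fun y => MvPolynomial.eval y (P a)) x
        + x 1 * pd 1 (fun y => MvPolynomial.eval y (P a)) x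
        + x 2 * pd 2 (fun y => MvPolynomial.eval y (P a)) x
      = (m : ℝ) * MvPolynomial.eval x (P a) := fun a => euler (hhom a) x
  have hr := rad_pos hx
  have hB : rad x ^ s = rad x ^ (s - 2) * (x 0 ^ 2 + x 1 ^ 2 + x 2 ^ 2) := by
    have h2 : rad x ^ s = rad x ^ (s - 2) * rad x ^ (2 : ℤ) := by
      rw [← zpow_add₀ hr.ne']; ring_nf
    rw [h2, show ((2:ℤ)) = ((2:ℕ) : ℤ) by norm_num, zpow_natCast, rad_sq hx]
  have hc : c * ((s : ℝ) + (m : ℝ) + 2) = 1 := inv_mul_cancel₀ hs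
  rw [hp i x]
  simp only [hpdβ]
  simp only [Fin.sum_univ_three]
  set A := rad x ^ (s - 2) with hA_def
  set B := rad x ^ s with hB_def
  set D : Fin 3 → Fin 3 → ℝ := fun j a => pd j (fun y => MvPolynomial.eval y (P a)) x with hD_def
  fin_cases i
  · simp only [lc, Fin.ext_iff, if_true, if_false, Fin.isValue, Fin.reduceFinMk]
    norm_num
    linear_combination (-(c * x 0)) * hDv + (c * B) * hE 0 + (-(c * (s:ℝ) * MvPolynomial.eval x (P 0))) * hB + (B * MvPolynomial.eval x (P 0)) * hc
  · simp only [lc, Fin.ext_iff, if_true, if_false, Fin.isValue, Fin.reduceFinMk]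
    norm_num
    linear_combination (-(c * x 1)) * hDv + (c * B) * hE 1 + (-(c * (s:ℝ) * MvPolynomial.eval x (P 1))) * hB + (B * MvPolynomial.eval x (P 1)) * hc
  · simp only [lc, Fin.ext_iff, if_true, if_false, Fin.isValue, Fin.reduceFinMk]
    norm_num
    linear_combination (-(c * x 2)) * hDv + (c * B) * hE 2 + (-(c * (s:ℝ) * MvPolynomial.eval x (P 2))) * hB + (B * MvPolynomial.eval x (P 2)) * hc
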